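/- arXiv:2511.23451 — 2 statements merged into one kernel-verified Lean document; each statement's English description precedes it below -/
import Mathlib

section
/- Let A ≥ B ≥ 0 be positive semidefinite matrices and α ≥ 1. Then Tr[A^α] ≥ Tr[B^α]. -/
open Matrix BigOperators
open scoped ComplexOrder

/-- Real matrix power `A^α` of a Hermitian matrix, defined by functional calculus
on the eigenvalues (and `0` if `A` is not Hermitian). -/
noncomputable def matRpow {n : Type*} [Fintype n] [DecidableEq n]
    (A : Matrix n n ℂ) (α : ℝ) : Matrix n n ℂ :=
  if hA : A.IsHermitian then
    (hA.eigenvectorUnitary : Matrix n n ℂ) *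
      diagonal (fun i => ((hA.eigenvalues i ^ α : ℝ) : ℂ)) *
      (hA.eigenvectorUnitary : Matrix n n ℂ)ᴴ
  else 0

section Aux

open Finset Module
open scoped InnerProductSpace

/-- If the counting functions of two monotone tuples are comparable, the tuples are
pointwise comparable. -/
lemma sorted_le_of_count {N : ℕ} (a b : Fin N → ℝ) (ha : Monotone a) (hb : Monotone b)
    (h : ∀ t : ℝ, (univ.filter (fun i => t ≤ b i)).card ≤ (univ.filter (fun i => t ≤ a i)).card) :
    ∀ k, b k ≤ a k := by
  intro k
  by_contra hk
  push_neg at hk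
  set t := b k with ht
  have h1 : (Finset.Ici k) ⊆ univ.filter (fun i => t ≤ b i) := by
    intro i hi
    simp only [Finset.mem_Ici] at hi
    simp [ht, hb hi]
  have h2 : univ.filter (fun i => t ≤ a i) ⊆ Finset.Ioi k := by
    intro i hi
    simp only [Finset.mem_filter] at hi
    rw [Finset.mem_Ioi]
    by_contra hik
    push_neg at hik
    exact absurd (hi.2.trans (ha hik)) (not_le.2 hk)
  have c1 := Finset.card_le_card h1
  have c2 := Finset.card_le_card h2
  have e1 : (Finset.Ici k).card = N - k := by simp [Fin.card_Ici]
  have e2 : (Finset.Ioi k).card = N - 1 - k := by simp [Fin.card_Ioi]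
  have := c1.trans ((h t).trans c2)
  rw [e1, e2] at this
  have hkN : (k : ℕ) < N := k.isLt
  omega

/-- Comparable counting functions give comparable sums of a monotone function. -/
lemma count_to_sum {ι : Type*} [Fintype ι] (a b : ι → ℝ) (g : ℝ → ℝ) (hg : Monotone g)
    (h : ∀ t : ℝ, Fintype.card {i // t ≤ b i} ≤ Fintype.card {i // t ≤ a i}) :
    ∑ i, g (b i) ≤ ∑ i, g (a i) := by
  classical
  obtain ⟨e⟩ : Nonempty (ι ≃ Fin (Fintype.card ι)) := ⟨Fintype.equivFin ι⟩
  set N := Fintype.card ι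
  set a' : Fin N → ℝ := (a ∘ e.symm) ∘ Tuple.sort (a ∘ e.symm) with ha'
  set b' : Fin N → ℝ := (b ∘ e.symm) ∘ Tuple.sort (b ∘ e.symm) with hb'
  have hma : Monotone a' := Tuple.monotone_sort _
  have hmb : Monotone b' := Tuple.monotone_sort _
  have hcount : ∀ t : ℝ, (univ.filter (fun i => t ≤ b' i)).card ≤
      (univ.filter (fun i => t ≤ a' i)).card := by
    intro t
    have key : ∀ (c : ι → ℝ) (f : Fin N ≃ Fin N),
        (univ.filter (fun i => t ≤ ((c ∘ e.symm) ∘ f) i)).card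
          = Fintype.card {i // t ≤ c i} := by
      intro c f
      rw [← Fintype.card_subtype]
      exact Fintype.card_congr ((f.trans e.symm).subtypeEquiv (by simp [Function.comp]))
    rw [key b (Tuple.sort _), key a (Tuple.sort _)]
    exact h t
  have hle : ∀ k, b' k ≤ a' k := sorted_le_of_count a' b' hma hmb hcount
  have hbs : ∑ i, g (b i) = ∑ k, g (b' k) :=
    Fintype.sum_equiv (e.trans (Tuple.sort (b ∘ e.symm)).symm) _ _
      (fun i => by simp [hb', Function.comp])
  have has : ∑ i, g (a i) = ∑ k, g (a' k) :=
    Fintype.sum_equiv (e.trans (Tuple.sort (a ∘ e.symm)).symm) _ _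
      (fun i => by simp [ha', Function.comp])
  rw [hbs, has]
  exact Finset.sum_le_sum fun k _ => hg (hle k)

variable {n : Type*} [Fintype n] [DecidableEq n]

lemma inner_toEuclideanLin (M : Matrix n n ℂ) (x : EuclideanSpace ℂ n) :
    (inner ℂ x (Matrix.toEuclideanLin M x) : ℂ)
      = star (WithLp.equiv 2 (n → ℂ) x) ⬝ᵥ (M *ᵥ WithLp.equiv 2 (n → ℂ) x) := by
  rw [EuclideanSpace.inner_eq_star_dotProduct, Matrix.toEuclideanLin_apply, dotProduct_comm]
  rfl

lemma toEuclideanLin_eigenvectorBasis {M : Matrix n n ℂ} (hM : M.IsHermitian) (j : n) :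
    Matrix.toEuclideanLin M (hM.eigenvectorBasis j)
      = (hM.eigenvalues j : ℂ) • hM.eigenvectorBasis j := by
  apply (WithLp.equiv 2 (n → ℂ)).injective
  rw [Matrix.toEuclideanLin_apply]
  ext i
  have := congrFun (hM.mulVec_eigenvectorBasis j) i
  simpa using this

/-- The quadratic form of a Hermitian matrix in terms of eigenvalues and the coefficients of
the eigenbasis expansion. -/
lemma quad_re {M : Matrix n n ℂ} (hM : M.IsHermitian) (x : EuclideanSpace ℂ n) :
    (inner ℂ x (Matrix.toEuclideanLin M x) : ℂ)
      = ∑ i, ((hM.eigenvalues i : ℂ) * (‖(inner ℂ (hM.eigenvectorBasis i) x : ℂ)‖ ^ 2 : ℝ)) := by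
  have hsym : (Matrix.toEuclideanLin M).IsSymmetric :=
    Matrix.isHermitian_iff_isSymmetric.mp hM
  set v := hM.eigenvectorBasis
  rw [← v.sum_inner_mul_inner x (Matrix.toEuclideanLin M x)]
  apply Finset.sum_congr rfl
  intro i _
  rw [← hsym (v i) x, toEuclideanLin_eigenvectorBasis hM i, inner_smul_left,
    ← inner_conj_symm x (v i)]
  rw [Complex.conj_ofReal]
  have h2 : (starRingEnd ℂ) (inner ℂ (v i) x : ℂ) * (inner ℂ (v i) x : ℂ)
      = ((‖(inner ℂ (v i) x : ℂ)‖ ^ 2 : ℝ) : ℂ) := by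
    rw [RCLike.conj_mul]; norm_cast
  linear_combination ((hM.eigenvalues i : ℂ)) * h2

omit [DecidableEq n] in
lemma norm_sq_eq_sum_inner (v : OrthonormalBasis n ℂ (EuclideanSpace ℂ n))
    (x : EuclideanSpace ℂ n) :
    ‖x‖ ^ 2 = ∑ i, ‖(inner ℂ (v i) x : ℂ)‖ ^ 2 := by
  have h := v.sum_inner_mul_inner x x
  have h2 : ∀ i, (inner ℂ x (v i) : ℂ) * (inner ℂ (v i) x : ℂ)
      = ((‖(inner ℂ (v i) x : ℂ)‖ ^ 2 : ℝ) : ℂ) := by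
    intro i
    rw [← inner_conj_symm x (v i), RCLike.conj_mul]; norm_cast
  simp_rw [h2] at h
  rw [inner_self_eq_norm_sq_to_K, ← Complex.ofReal_sum] at h
  have h' : ((∑ i, ‖(inner ℂ (v i) x : ℂ)‖ ^ 2 : ℝ) : ℂ) = ((‖x‖ ^ 2 : ℝ) : ℂ) := by
    rw [h]; norm_cast
  exact (RCLike.ofReal_injective (K := ℂ) h').symm

omit [DecidableEq n] in
lemma mem_span_orthonormal_inner_eq_zero (v : OrthonormalBasis n ℂ (EuclideanSpace ℂ n))
    {S : Set n} {x : EuclideanSpace ℂ n} (hx : x ∈ Submodule.span ℂ (⇑v '' S))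
    {i : n} (hi : i ∉ S) : (inner ℂ (v i) x : ℂ) = 0 := by
  classical
  have : x ∈ Submodule.span ℂ (⇑v.toBasis '' S) := by rwa [OrthonormalBasis.coe_toBasis]
  have hsupp := (Basis.mem_span_image v.toBasis).mp this
  have : v.toBasis.repr x i = 0 := by
    by_contra h
    exact hi (hsupp (Finsupp.mem_support_iff.mpr h))
  rwa [v.coe_toBasis_repr_apply, v.repr_apply_apply x i] at this

/-- **Weyl's monotonicity** in counting form: if `A - B` is PSD then, for each threshold `t`,
`A` has at least as many eigenvalues `≥ t` as `B` does. -/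
lemma weyl_count (A B : Matrix n n ℂ) (hA : A.IsHermitian) (hB : B.IsHermitian)
    (hAB : (A - B).PosSemidef) (t : ℝ) :
    Fintype.card {i // t ≤ hB.eigenvalues i} ≤ Fintype.card {i // t ≤ hA.eigenvalues i} := by
  classical
  set u := hA.eigenvectorBasis with hu
  set v := hB.eigenvectorBasis with hv
  set S : Set n := {i | t ≤ hB.eigenvalues i} with hS
  set T : Set n := {i | hA.eigenvalues i < t} with hT
  set V : Submodule ℂ (EuclideanSpace ℂ n) := Submodule.span ℂ (⇑v '' S) with hV
  set W : Submodule ℂ (EuclideanSpace ℂ n) := Submodule.span ℂ (⇑u '' T) with hW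
  have hdisj : V ⊓ W = ⊥ := by
    rw [Submodule.eq_bot_iff]
    intro x hx
    obtain ⟨hxV, hxW⟩ := Submodule.mem_inf.mp hx
    by_contra hx0
    have hxn : (0 : ℝ) < ‖x‖ ^ 2 := pow_pos (norm_pos_iff.mpr hx0) 2
    -- B-quadratic form lower bound
    have hqB : t * ‖x‖ ^ 2 ≤ (inner ℂ x (Matrix.toEuclideanLin B x) : ℂ).re := by
      have := quad_re hB x
      have hre : (inner ℂ x (Matrix.toEuclideanLin B x) : ℂ).re
          = ∑ i, hB.eigenvalues i * ‖(inner ℂ (v i) x : ℂ)‖ ^ 2 := by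
        rw [this, Complex.re_sum]
        apply Finset.sum_congr rfl
        intro i _
        rw [← Complex.ofReal_mul, Complex.ofReal_re]
      rw [hre, norm_sq_eq_sum_inner v x, Finset.mul_sum]
      apply Finset.sum_le_sum
      intro i _
      by_cases hiS : i ∈ S
      · have hts : t ≤ hB.eigenvalues i := hiS
        exact mul_le_mul_of_nonneg_right hts (sq_nonneg _)
      · rw [mem_span_orthonormal_inner_eq_zero v hxV hiS]; simp
    -- A-quadratic form strict upper bound
    have hqA : (inner ℂ x (Matrix.toEuclideanLin A x) : ℂ).re < t * ‖x‖ ^ 2 := by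
      have := quad_re hA x
      have hre : (inner ℂ x (Matrix.toEuclideanLin A x) : ℂ).re
          = ∑ i, hA.eigenvalues i * ‖(inner ℂ (u i) x : ℂ)‖ ^ 2 := by
        rw [this, Complex.re_sum]
        apply Finset.sum_congr rfl
        intro i _
        rw [← Complex.ofReal_mul, Complex.ofReal_re]
      rw [hre, norm_sq_eq_sum_inner u x, Finset.mul_sum]
      -- find a nonzero coefficient
      have hex : ∃ j, (inner ℂ (u j) x : ℂ) ≠ 0 := by
        by_contra hall
        push_neg at hall
        have : ‖x‖ ^ 2 = 0 := by
          rw [norm_sq_eq_sum_inner u x]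
          apply Finset.sum_eq_zero; intro i _; rw [hall i]; simp
        exact absurd this (ne_of_gt hxn)
      obtain ⟨j, hj⟩ := hex
      have hjT : j ∈ T := by
        by_contra hjT
        exact hj (mem_span_orthonormal_inner_eq_zero u hxW hjT)
      apply Finset.sum_lt_sum
      · intro i _
        by_cases hiT : i ∈ T
        · have hts : hA.eigenvalues i < t := hiT
          exact mul_le_mul_of_nonneg_right (le_of_lt hts) (sq_nonneg _)
        · rw [mem_span_orthonormal_inner_eq_zero u hxW hiT]; simp
      · have hjt : hA.eigenvalues j < t := hjT
        exact ⟨j, Finset.mem_univ j,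
          mul_lt_mul_of_pos_right hjt (pow_pos (norm_pos_iff.mpr hj) 2)⟩
    -- PSD comparison
    have hcomp : (inner ℂ x (Matrix.toEuclideanLin B x) : ℂ).re
        ≤ (inner ℂ x (Matrix.toEuclideanLin A x) : ℂ).re := by
      have h0 := hAB.re_dotProduct_nonneg (WithLp.equiv 2 (n → ℂ) x)
      rw [inner_toEuclideanLin, inner_toEuclideanLin]
      rw [Matrix.sub_mulVec, dotProduct_sub] at h0
      simp only [Complex.sub_re, RCLike.re_to_complex] at h0 ⊢
      linarith
    linarith
  -- dimension count
  have hVrank : finrank ℂ V = Fintype.card S := by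
    have hli : LinearIndependent ℂ (fun i : S => v i) :=
      v.orthonormal.linearIndependent.comp Subtype.val Subtype.val_injective
    have : Set.range (fun i : S => v i) = ⇑v '' S := by
      rw [← Set.image_eq_range]
    rw [hV, ← this, finrank_span_eq_card hli]
  have hWrank : finrank ℂ W = Fintype.card T := by
    have hli : LinearIndependent ℂ (fun i : T => u i) :=
      u.orthonormal.linearIndependent.comp Subtype.val Subtype.val_injective
    have : Set.range (fun i : T => u i) = ⇑u '' T := by
      rw [← Set.image_eq_range]
    rw [hW, ← this, finrank_span_eq_card hli]
  have hdim : finrank ℂ V + finrank ℂ W ≤ Fintype.card n := by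
    have := Submodule.finrank_sup_add_finrank_inf_eq V W
    rw [hdisj] at this
    simp only [finrank_bot, add_zero] at this
    rw [← this]
    exact (Submodule.finrank_le (V ⊔ W)).trans (le_of_eq finrank_euclideanSpace)
  rw [hVrank, hWrank] at hdim
  have hSc : Fintype.card S = Fintype.card {i // t ≤ hB.eigenvalues i} := by
    apply Fintype.card_congr; exact Equiv.refl _
  have hTc : Fintype.card T + Fintype.card {i // t ≤ hA.eigenvalues i} = Fintype.card n := by
    have : Fintype.card {i // t ≤ hA.eigenvalues i}
        = Fintype.card {i // ¬ hA.eigenvalues i < t} := by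
      apply Fintype.card_congr; exact Equiv.subtypeEquiv (Equiv.refl n) (by simp [not_lt])
    rw [this]
    have h2 : Fintype.card T = Fintype.card {i // hA.eigenvalues i < t} := by
      apply Fintype.card_congr; exact Equiv.refl _
    have hle : Fintype.card {i // hA.eigenvalues i < t} ≤ Fintype.card n :=
      Fintype.card_subtype_le _
    rw [h2, Fintype.card_subtype_compl]
    omega
  omega

/-- The real part of the trace of `matRpow` is the sum of the `α`-th powers of the
eigenvalues. -/
lemma trace_matRpow (A : Matrix n n ℂ) (hA : A.IsHermitian) (α : ℝ) :
    (matRpow A α).trace.re = ∑ i, (hA.eigenvalues i) ^ α := by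
  rw [matRpow, dif_pos hA]
  rw [Matrix.trace_mul_cycle]
  have hU : (hA.eigenvectorUnitary : Matrix n n ℂ)ᴴ * (hA.eigenvectorUnitary : Matrix n n ℂ)
      = 1 := by
    simpa [star_eq_conjTranspose] using
      (Matrix.mem_unitaryGroup_iff'.mp hA.eigenvectorUnitary.2)
  rw [hU, Matrix.one_mul, Matrix.trace_diagonal]
  rw [Complex.re_sum]
  simp

end Aux

/-- If `A ≥ B ≥ 0` and `α ≥ 1`, then `Tr[A^α] ≥ Tr[B^α]`. -/
theorem trace_rpow_monotone {n : Type*} [Fintype n] [DecidableEq n]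
    (A B : Matrix n n ℂ) (hA : A.PosSemidef) (hB : B.PosSemidef) (hAB : (A - B).PosSemidef)
    (α : ℝ) (hα : 1 ≤ α) :
    (matRpow B α).trace.re ≤ (matRpow A α).trace.re := by
  classical
  rw [trace_matRpow A hA.1 α, trace_matRpow B hB.1 α]
  have hα0 : (0 : ℝ) ≤ α := by linarith
  set g : ℝ → ℝ := fun x => (max x 0) ^ α with hg'
  have hg : Monotone g := fun x y hxy =>
    Real.rpow_le_rpow (le_max_right x 0) (max_le_max hxy le_rfl) hα0
  have key := count_to_sum hA.1.eigenvalues hB.1.eigenvalues g hg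
    (fun t => weyl_count A B hA.1 hB.1 hAB t)
  have hBe : ∀ i, g (hB.1.eigenvalues i) = (hB.1.eigenvalues i) ^ α := by
    intro i
    rw [hg']
    simp [max_eq_left (hB.eigenvalues_nonneg i)]
  have hAe : ∀ i, g (hA.1.eigenvalues i) = (hA.1.eigenvalues i) ^ α := by
    intro i
    rw [hg']
    simp [max_eq_left (hA.eigenvalues_nonneg i)]
  calc ∑ i, (hB.1.eigenvalues i) ^ α = ∑ i, g (hB.1.eigenvalues i) := by simp [hBe]
    _ ≤ ∑ i, g (hA.1.eigenvalues i) := key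
    _ = ∑ i, (hA.1.eigenvalues i) ^ α := by simp [hAe]
end

section
/- For α > 1, the sandwiched Rényi divergence D̃_α(ρ‖σ) = (α−1)^{−1} log Tr[(σ^{(1−α)/(2α)} ρ σ^{(1−α)/(2α)})^α] satisfies weak quasi-concavity: for any convex combination ρ = Σ_{i=1}^N p_i ρ_i of states with supports in supp(σ), D̃_α(ρ‖σ) ≥ min_{1≤i≤N} D̃_α(ρ_i‖σ) − (α/(α−1)) log N. -/
open Matrix BigOperators
open scoped ComplexOrder

/-- `Q̃_α(ρ‖σ) = Tr[(σ^((1-α)/(2α)) ρ σ^((1-α)/(2α)))^α]`. -/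
noncomputable def Qtilde {n : Type*} [Fintype n] [DecidableEq n]
    (α : ℝ) (ρ σ : Matrix n n ℂ) : ℝ :=
  (matRpow (matRpow σ ((1 - α) / (2 * α)) * ρ * matRpow σ ((1 - α) / (2 * α))) α).trace.re

/-- The sandwiched Rényi divergence `D̃_α(ρ‖σ) = (α-1)⁻¹ log Q̃_α(ρ‖σ)`. -/
noncomputable def sandwichedRenyi {n : Type*} [Fintype n] [DecidableEq n]
    (α : ℝ) (ρ σ : Matrix n n ℂ) : ℝ :=
  (α - 1)⁻¹ * Real.log (Qtilde α ρ σ)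

section Aux
variable {n : Type*} [Fintype n] [DecidableEq n]

lemma matRpow_of_isHermitian {A : Matrix n n ℂ} (hA : A.IsHermitian) (α : ℝ) :
    matRpow A α = (hA.eigenvectorUnitary : Matrix n n ℂ) *
      diagonal (fun i => ((hA.eigenvalues i ^ α : ℝ) : ℂ)) *
      (hA.eigenvectorUnitary : Matrix n n ℂ)ᴴ := by
  rw [matRpow, dif_pos hA]

lemma matRpow_isHermitian {A : Matrix n n ℂ} (hA : A.IsHermitian) (α : ℝ) :
    (matRpow A α).IsHermitian := by
  rw [matRpow_of_isHermitian hA]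
  unfold Matrix.IsHermitian
  simp only [Matrix.conjTranspose_mul, Matrix.diagonal_conjTranspose, mul_assoc,
    Matrix.conjTranspose_conjTranspose]
  have : (star fun i => ((hA.eigenvalues i ^ α : ℝ) : ℂ)) =
      fun i => ((hA.eigenvalues i ^ α : ℝ) : ℂ) := funext fun i => Complex.conj_ofReal _
  rw [this]

lemma matRpow_posSemidef {A : Matrix n n ℂ} (hA : A.PosSemidef) (α : ℝ) :
    (matRpow A α).PosSemidef := by
  rw [matRpow_of_isHermitian hA.1]
  exact Matrix.PosSemidef.mul_mul_conjTranspose_same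
    (Matrix.posSemidef_diagonal_iff.mpr fun i => by
      rw [Complex.zero_le_real]
      exact Real.rpow_nonneg (hA.eigenvalues_nonneg i) α) _

lemma matRpow_mulVec_eigenvectorBasis {A : Matrix n n ℂ} (hA : A.IsHermitian) (α : ℝ) (k : n) :
    matRpow A α *ᵥ ⇑(hA.eigenvectorBasis k) =
      ((hA.eigenvalues k ^ α : ℝ) : ℂ) • ⇑(hA.eigenvectorBasis k) := by
  rw [matRpow_of_isHermitian hA, ← Matrix.mulVec_mulVec, ← Matrix.mulVec_mulVec]
  rw [← Matrix.star_eq_conjTranspose, hA.star_eigenvectorUnitary_mulVec k,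
    Matrix.diagonal_mulVec_single]
  have : (Pi.single k (((hA.eigenvalues k ^ α : ℝ) : ℂ) * 1) : n → ℂ) =
      ((hA.eigenvalues k ^ α : ℝ) : ℂ) • (Pi.single k 1 : n → ℂ) := by
    rw [← Pi.single_smul, smul_eq_mul]
  rw [this, Matrix.mulVec_smul, hA.eigenvectorUnitary_mulVec]

lemma psd_smul {M : Matrix n n ℂ} (hM : M.PosSemidef) {c : ℝ} (hc : 0 ≤ c) :
    ((c : ℂ) • M).PosSemidef := by
  refine ⟨?_, fun x => ?_⟩
  · unfold Matrix.IsHermitian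
    simp [Matrix.conjTranspose_smul, hM.1.eq, Complex.conj_ofReal]
  · exact (hM.smul (Complex.zero_le_real.mpr hc)).2 x

lemma psd_sum {N : ℕ} (f : Fin N → Matrix n n ℂ) (s : Finset (Fin N))
    (hf : ∀ i ∈ s, (f i).PosSemidef) : (∑ i ∈ s, f i).PosSemidef := by
  classical
  induction s using Finset.induction_on with
  | empty => simpa using Matrix.PosSemidef.zero
  | insert _ _ hnotmem ih =>
    rw [Finset.sum_insert hnotmem]
    exact ((hf _ (Finset.mem_insert_self _ _)).add
      (ih fun i hi => hf i (Finset.mem_insert_of_mem hi)))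

lemma matRpow_trace {A : Matrix n n ℂ} (hA : A.IsHermitian) (α : ℝ) :
    (matRpow A α).trace.re = ∑ i, (hA.eigenvalues i) ^ α := by
  rw [matRpow, dif_pos hA, Matrix.trace_mul_cycle]
  rw [← Matrix.star_eq_conjTranspose,
    (Matrix.mem_unitaryGroup_iff').mp hA.eigenvectorUnitary.2, one_mul, Matrix.trace_diagonal]
  simp

lemma key_mono {A B : Matrix n n ℂ} (hA : A.PosSemidef) (hB : B.PosSemidef)
    {p : ℝ} (hp : 0 ≤ p) (hAB : (A - (p:ℂ) • B).PosSemidef) {α : ℝ} (hα : 1 ≤ α) :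
    p ^ α * (matRpow B α).trace.re ≤ (matRpow A α).trace.re := by
  rw [matRpow_trace hA.1, matRpow_trace hB.1]
  set U := (hA.1.eigenvectorUnitary : Matrix n n ℂ) with hUdef
  set V := (hB.1.eigenvectorUnitary : Matrix n n ℂ) with hVdef
  set lam := hA.1.eigenvalues with hlam
  set mu := hB.1.eigenvalues with hmu
  set W := Uᴴ * V with hWdef
  set c : n → n → ℝ := fun k l => Complex.normSq (W k l) with hc
  have hU1 : U * Uᴴ = 1 := by
    rw [← Matrix.star_eq_conjTranspose]
    exact Matrix.mem_unitaryGroup_iff.mp hA.1.eigenvectorUnitary.2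
  have hU1' : Uᴴ * U = 1 := by
    rw [← Matrix.star_eq_conjTranspose]
    exact Matrix.mem_unitaryGroup_iff'.mp hA.1.eigenvectorUnitary.2
  have hV1 : V * Vᴴ = 1 := by
    rw [← Matrix.star_eq_conjTranspose]
    exact Matrix.mem_unitaryGroup_iff.mp hB.1.eigenvectorUnitary.2
  have hV1' : Vᴴ * V = 1 := by
    rw [← Matrix.star_eq_conjTranspose]
    exact Matrix.mem_unitaryGroup_iff'.mp hB.1.eigenvectorUnitary.2
  have colsum : ∀ l, ∑ k, c k l = 1 := by
    intro l
    have h2 : (Wᴴ * W) l l = 1 := by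
      have : Wᴴ * W = 1 := by
        rw [hWdef, Matrix.conjTranspose_mul, Matrix.conjTranspose_conjTranspose,
          mul_assoc, ← mul_assoc U, hU1, one_mul, hV1']
      rw [this, Matrix.one_apply_eq]
    rw [Matrix.mul_apply] at h2
    simp only [Matrix.conjTranspose_apply, Matrix.star_apply] at h2
    have h3 : ∑ k, ((c k l : ℝ) : ℂ) = 1 := by
      rw [← h2]
      refine Finset.sum_congr rfl fun k _ => ?_
      rw [Complex.star_def]
      exact Complex.normSq_eq_conj_mul_self
    have h4 := congrArg Complex.re h3
    simpa [Complex.re_sum] using h4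
  have rowsum : ∀ k, ∑ l, c k l = 1 := by
    intro k
    have h2 : (W * Wᴴ) k k = 1 := by
      have : W * Wᴴ = 1 := by
        rw [hWdef, Matrix.conjTranspose_mul, Matrix.conjTranspose_conjTranspose,
          mul_assoc, ← mul_assoc V, hV1, one_mul, hU1']
      rw [this, Matrix.one_apply_eq]
    rw [Matrix.mul_apply] at h2
    simp only [Matrix.conjTranspose_apply, Matrix.star_apply] at h2
    have h3 : ∑ l, ((c k l : ℝ) : ℂ) = 1 := by
      rw [← h2]
      refine Finset.sum_congr rfl fun l _ => ?_
      rw [Complex.star_def, Complex.mul_conj]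
    have h4 := congrArg Complex.re h3
    simpa [Complex.re_sum] using h4
  have lamnn : ∀ k, 0 ≤ lam k := hA.eigenvalues_nonneg
  have munn : ∀ l, 0 ≤ mu l := hB.eigenvalues_nonneg
  have key : ∀ l, p * mu l ≤ ∑ k, c k l * lam k := by
    intro l
    set v : n → ℂ := ⇑(hB.1.eigenvectorBasis l) with hv
    have hvW : Uᴴ *ᵥ v = fun k => W k l := by
      ext k
      rw [hWdef, Matrix.mul_apply, Matrix.mulVec, dotProduct]
      exact Finset.sum_congr rfl fun j _ => by
        rw [hVdef, Matrix.IsHermitian.eigenvectorUnitary_apply]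
    have hBside : p * mu l = (dotProduct (star v) (((p:ℂ) • B) *ᵥ v)).re := by
      rw [Matrix.smul_mulVec, dotProduct_smul]
      rw [smul_eq_mul, Complex.re_ofReal_mul]
      congr 1
      exact hB.1.eigenvalues_eq l
    have hAside : (dotProduct (star v) (A *ᵥ v)).re = ∑ k, c k l * lam k := by
      have e1 : A *ᵥ v = U *ᵥ (diagonal (RCLike.ofReal ∘ lam) *ᵥ (Uᴴ *ᵥ v)) := by
        conv_lhs => rw [hA.1.spectral_theorem]
        rw [Unitary.conjStarAlgAut_apply, Matrix.star_eq_conjTranspose, ← Matrix.mulVec_mulVec, ← Matrix.mulVec_mulVec]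
      have e2 : star v ᵥ* U = star (Uᴴ *ᵥ v) := by
        rw [Matrix.star_mulVec, Matrix.conjTranspose_conjTranspose]
      rw [e1, Matrix.dotProduct_mulVec, e2, hvW]
      rw [dotProduct, Complex.re_sum]
      refine Finset.sum_congr rfl fun k _ => ?_
      simp only [Matrix.mulVec_diagonal, Pi.star_apply, Function.comp_apply]
      rw [Complex.star_def, mul_left_comm, ← Complex.normSq_eq_conj_mul_self]
      change ((lam k : ℂ) * (Complex.normSq (W k l) : ℂ)).re = _
      rw [Complex.re_ofReal_mul, Complex.ofReal_re, mul_comm]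
    have hineq := hAB.re_dotProduct_nonneg v
    rw [Matrix.sub_mulVec, dotProduct_sub] at hineq
    simp only [RCLike.re_to_complex, Complex.sub_re] at hineq
    rw [hBside, ← hAside]
    linarith
  calc p ^ α * ∑ l, mu l ^ α = ∑ l, (p * mu l) ^ α := by
        rw [Finset.mul_sum]
        exact Finset.sum_congr rfl fun l _ => (Real.mul_rpow hp (munn l)).symm
    _ ≤ ∑ l, (∑ k, c k l * lam k) ^ α := by
        refine Finset.sum_le_sum fun l _ => ?_
        exact Real.rpow_le_rpow (mul_nonneg hp (munn l)) (key l) (le_trans zero_le_one hα)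
    _ ≤ ∑ l, ∑ k, c k l * lam k ^ α := by
        refine Finset.sum_le_sum fun l _ => ?_
        exact Real.rpow_arith_mean_le_arith_mean_rpow Finset.univ (fun k => c k l) lam
          (fun k _ => Complex.normSq_nonneg _) (colsum l) (fun k _ => lamnn k) hα
    _ = ∑ k, lam k ^ α := by
        rw [Finset.sum_comm]
        refine Finset.sum_congr rfl fun k _ => ?_
        rw [← Finset.sum_mul, rowsum, one_mul]

lemma sandwich_ne_zero {ρ σ : Matrix n n ℂ} (hρ : ρ.PosSemidef)
    (hρtr : ρ.trace = 1) (hσ : σ.PosSemidef)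
    (hsupp : ∀ v, σ *ᵥ v = 0 → ρ *ᵥ v = 0) (s : ℝ) :
    matRpow σ s * ρ * matRpow σ s ≠ 0 := by
  intro hM0
  set S := matRpow σ s with hS
  have hSh : Sᴴ = S := matRpow_isHermitian hσ.1 s
  have h1 : ∀ x : n → ℂ, ρ *ᵥ (S *ᵥ x) = 0 := by
    intro x
    have h2 : dotProduct (star x) ((S * ρ * S) *ᵥ x) = 0 := by
      rw [hM0]; simp
    have h3 : dotProduct (star (S *ᵥ x)) (ρ *ᵥ (S *ᵥ x)) = 0 := by
      rw [← h2, Matrix.star_mulVec, hSh, ← Matrix.dotProduct_mulVec,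
        Matrix.mulVec_mulVec, Matrix.mulVec_mulVec, mul_assoc]
    exact (hρ.dotProduct_mulVec_zero_iff _).mp h3
  have h4 : ∀ k, ρ *ᵥ ⇑(hσ.1.eigenvectorBasis k) = 0 := by
    intro k
    by_cases hzero : hσ.1.eigenvalues k = 0
    · apply hsupp
      have h := hσ.1.mulVec_eigenvectorBasis k
      rwa [hzero, zero_smul] at h
    · have hpos : 0 < hσ.1.eigenvalues k :=
        lt_of_le_of_ne (hσ.eigenvalues_nonneg k) (Ne.symm hzero)
      have h5 := h1 ⇑(hσ.1.eigenvectorBasis k)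
      rw [matRpow_mulVec_eigenvectorBasis hσ.1 s k, Matrix.mulVec_smul] at h5
      have hne : ((hσ.1.eigenvalues k ^ s : ℝ) : ℂ) ≠ 0 := by
        exact_mod_cast ne_of_gt (Real.rpow_pos_of_pos hpos s)
      exact (smul_eq_zero.mp h5).resolve_left hne
  have h7 : ρ * (hσ.1.eigenvectorUnitary : Matrix n n ℂ) = 0 := by
    ext i k
    have h8 := congrFun (h4 k) i
    simp only [Matrix.mulVec, dotProduct, Pi.zero_apply] at h8
    simp only [Matrix.mul_apply, Matrix.zero_apply]
    exact (Finset.sum_congr rfl fun j _ => by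
      rw [Matrix.IsHermitian.eigenvectorUnitary_apply]).trans h8
  have h6 : ρ = 0 := by
    calc ρ = ρ * ((hσ.1.eigenvectorUnitary : Matrix n n ℂ) *
            (hσ.1.eigenvectorUnitary : Matrix n n ℂ)ᴴ) := by
          rw [← Matrix.star_eq_conjTranspose,
            Matrix.mem_unitaryGroup_iff.mp hσ.1.eigenvectorUnitary.2, mul_one]
      _ = 0 := by rw [← mul_assoc, h7, zero_mul]
  rw [h6] at hρtr
  simp at hρtr

lemma Qtilde_pos {ρ σ : Matrix n n ℂ} (hρ : ρ.PosSemidef)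
    (hρtr : ρ.trace = 1) (hσ : σ.PosSemidef)
    (hsupp : ∀ v, σ *ᵥ v = 0 → ρ *ᵥ v = 0) (α : ℝ) :
    0 < Qtilde α ρ σ := by
  set s := (1 - α) / (2 * α) with hs
  set S := matRpow σ s with hS
  have hSh : Sᴴ = S := matRpow_isHermitian hσ.1 s
  have hM : (S * ρ * S).PosSemidef := by
    have h := hρ.mul_mul_conjTranspose_same S
    rwa [hSh] at h
  have hMne : S * ρ * S ≠ 0 := sandwich_ne_zero hρ hρtr hσ hsupp s
  rw [Qtilde, ← hs, ← hS, matRpow_trace hM.1]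
  have hex : ∃ k, hM.1.eigenvalues k ≠ 0 := by
    by_contra hcon
    push_neg at hcon
    apply hMne
    conv_lhs => rw [hM.1.spectral_theorem]
    have hz : (RCLike.ofReal ∘ hM.1.eigenvalues : n → ℂ) = 0 :=
      funext fun k => by simp [hcon k]
    rw [hz, show (Matrix.diagonal (0 : n → ℂ)) = 0 from Matrix.diagonal_zero, map_zero]
  obtain ⟨k, hk⟩ := hex
  refine Finset.sum_pos' (fun l _ => Real.rpow_nonneg (hM.eigenvalues_nonneg l) α)
    ⟨k, Finset.mem_univ k, Real.rpow_pos_of_pos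
      (lt_of_le_of_ne (hM.eigenvalues_nonneg k) (Ne.symm hk)) α⟩

end Aux

/-- Weak quasi-concavity of the sandwiched Rényi divergence for `α > 1`:
`D̃_α(Σ_i p_i ρ_i‖σ) ≥ min_i D̃_α(ρ_i‖σ) − (α/(α−1)) log N`. -/
theorem sandwichedRenyi_weak_quasi_concavity {d : ℕ} (N : ℕ) (hN : 0 < N)
    (p : Fin N → ℝ) (hp : ∀ i, 0 ≤ p i) (hpsum : ∑ i, p i = 1)
    (ρi : Fin N → Matrix (Fin d) (Fin d) ℂ)
    (hρi : ∀ i, (ρi i).PosSemidef) (hρtr : ∀ i, (ρi i).trace = 1)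
    (σ : Matrix (Fin d) (Fin d) ℂ) (hσ : σ.PosSemidef) (hσtr : σ.trace = 1)
    (hsupp : ∀ i, ∀ v : Fin d → ℂ, σ.mulVec v = 0 → (ρi i).mulVec v = 0)
    (α : ℝ) (hα : 1 < α) :
    (Finset.univ.inf' (Finset.univ_nonempty_iff.mpr (Fin.pos_iff_nonempty.mp hN))
        fun i => sandwichedRenyi α (ρi i) σ)
      - (α / (α - 1)) * Real.log N
      ≤ sandwichedRenyi α (∑ i, (p i : ℂ) • ρi i) σ := by
  -- choose j with p j ≥ 1/N
  have hNpos : (0:ℝ) < N := Nat.cast_pos.mpr hN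
  have hne : (Finset.univ : Finset (Fin N)).Nonempty :=
    Finset.univ_nonempty_iff.mpr (Fin.pos_iff_nonempty.mp hN)
  have hex : ∃ j, (N:ℝ)⁻¹ ≤ p j := by
    by_contra hcon
    push_neg at hcon
    have h := Finset.sum_lt_sum_of_nonempty hne (fun i _ => hcon i)
    rw [hpsum, Finset.sum_const, Finset.card_univ, Fintype.card_fin, nsmul_eq_mul,
      mul_inv_cancel₀ (ne_of_gt hNpos)] at h
    exact lt_irrefl _ h
  obtain ⟨j, hj⟩ := hex
  have hpj : 0 < p j := lt_of_lt_of_le (inv_pos.mpr hNpos) hj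
  set s : ℝ := (1 - α) / (2 * α) with hs
  set S := matRpow σ s with hS
  have hSh : Sᴴ = S := matRpow_isHermitian hσ.1 s
  set ρ := ∑ i, (p i : ℂ) • ρi i with hρdef
  have hρ : ρ.PosSemidef := psd_sum _ _ fun i _ => psd_smul (hρi i) (hp i)
  have hApsd : (S * ρ * S).PosSemidef := by
    have h := hρ.mul_mul_conjTranspose_same S; rwa [hSh] at h
  have hBpsd : (S * ρi j * S).PosSemidef := by
    have h := (hρi j).mul_mul_conjTranspose_same S; rwa [hSh] at h
  have hdiff : ((S * ρ * S) - ((p j : ℝ) : ℂ) • (S * ρi j * S)).PosSemidef := by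
    have hAB : (S * ρ * S) - ((p j : ℝ) : ℂ) • (S * ρi j * S) =
        S * (∑ i ∈ Finset.univ.erase j, (p i : ℂ) • ρi i) * S := by
      have hsplit : ρ - (p j : ℂ) • ρi j = ∑ i ∈ Finset.univ.erase j, (p i : ℂ) • ρi i := by
        rw [hρdef, ← Finset.sum_erase_add Finset.univ _ (Finset.mem_univ j)]
        abel
      rw [← hsplit, Matrix.mul_sub, Matrix.sub_mul, Matrix.mul_smul, Matrix.smul_mul]
    rw [hAB]
    have hpsd2 : (∑ i ∈ Finset.univ.erase j, (p i : ℂ) • ρi i).PosSemidef :=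
      psd_sum _ _ fun i _ => psd_smul (hρi i) (hp i)
    have h := hpsd2.mul_mul_conjTranspose_same S
    rwa [hSh] at h
  have hkey : (p j) ^ α * Qtilde α (ρi j) σ ≤ Qtilde α ρ σ := by
    show (p j) ^ α * (matRpow (S * ρi j * S) α).trace.re ≤ (matRpow (S * ρ * S) α).trace.re
    exact key_mono hApsd hBpsd hpj.le hdiff hα.le
  have hQj : 0 < Qtilde α (ρi j) σ := Qtilde_pos (hρi j) (hρtr j) hσ (hsupp j) α
  have hQ : 0 < Qtilde α ρ σ :=
    lt_of_lt_of_le (mul_pos (Real.rpow_pos_of_pos hpj α) hQj) hkey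
  have hlog : α * Real.log (p j) + Real.log (Qtilde α (ρi j) σ) ≤ Real.log (Qtilde α ρ σ) := by
    have h1 : Real.log ((p j) ^ α * Qtilde α (ρi j) σ) ≤ Real.log (Qtilde α ρ σ) :=
      Real.log_le_log (mul_pos (Real.rpow_pos_of_pos hpj α) hQj) hkey
    rwa [Real.log_mul (ne_of_gt (Real.rpow_pos_of_pos hpj α)) (ne_of_gt hQj),
      Real.log_rpow hpj] at h1
  have hα1 : (0:ℝ) < α - 1 := sub_pos.mpr hα
  have hlogpj : -(Real.log N) ≤ Real.log (p j) := by
    rw [← Real.log_inv]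
    exact Real.log_le_log (inv_pos.mpr hNpos) hj
  have goal2 : sandwichedRenyi α (ρi j) σ - (α / (α - 1)) * Real.log N ≤
      sandwichedRenyi α ρ σ := by
    rw [sandwichedRenyi, sandwichedRenyi]
    have h2 : (α-1)⁻¹ * (α * Real.log (p j) + Real.log (Qtilde α (ρi j) σ)) ≤
        (α-1)⁻¹ * Real.log (Qtilde α ρ σ) :=
      mul_le_mul_of_nonneg_left hlog (inv_nonneg.mpr hα1.le)
    have h3 : α * (-(Real.log N)) ≤ α * Real.log (p j) :=
      mul_le_mul_of_nonneg_left hlogpj (by linarith)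
    have h4 : (α-1)⁻¹ * (α * (-(Real.log N)) + Real.log (Qtilde α (ρi j) σ)) ≤
        (α-1)⁻¹ * (α * Real.log (p j) + Real.log (Qtilde α (ρi j) σ)) :=
      mul_le_mul_of_nonneg_left (by linarith) (inv_nonneg.mpr hα1.le)
    have h5 : (α-1)⁻¹ * (α * (-(Real.log N)) + Real.log (Qtilde α (ρi j) σ)) =
        (α-1)⁻¹ * Real.log (Qtilde α (ρi j) σ) - (α / (α - 1)) * Real.log N := by
      field_simp
      ring
    linarith
  refine le_trans ?_ goal2
  have hinf : (Finset.univ.inf' (Finset.univ_nonempty_iff.mpr (Fin.pos_iff_nonempty.mp hN))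
      fun i => sandwichedRenyi α (ρi i) σ) ≤ sandwichedRenyi α (ρi j) σ :=
    Finset.inf'_le _ (Finset.mem_univ j)
  linarith
end
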